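/- arXiv:math/0608104 — 5 statements merged into one kernel-verified Lean document; each statement's English description precedes it below -/
import Mathlib

section
/- Let q be a positive real number, let Q(z) = Σ_{i=0}^n b_i z^i be a real polynomial of degree n (so b_n ≠ 0), and define P(z) = Σ_{i=0}^n b_i z^{n−i}(z² + q)^i, so that P(z) = z^n Q(z + q/z). Then all complex roots of P lie on the circle |z| = √q if and only if all complex roots of Q are real and lie in the interval [−2√q, 2√q]. -/
open Polynomial Finset

theorem roots_on_circle_iff_roots_real_in_interval (q : ℝ) (hq : 0 < q) (n : ℕ)
    (b : ℕ → ℝ) (hbn : b n ≠ 0)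
    (Q P : Polynomial ℝ)
    (hQ : Q = ∑ i ∈ Finset.range (n + 1), C (b i) * X ^ i)
    (hP : P = ∑ i ∈ Finset.range (n + 1), C (b i) * X ^ (n - i) * (X ^ 2 + C q) ^ i) :
    (∀ z : ℂ, (P.map (algebraMap ℝ ℂ)).eval z = 0 → ‖z‖ = Real.sqrt q) ↔
      (∀ z : ℂ, (Q.map (algebraMap ℝ ℂ)).eval z = 0 →
        ∃ x : ℝ, z = (x : ℂ) ∧ -(2 * Real.sqrt q) ≤ x ∧ x ≤ 2 * Real.sqrt q) := by
  have hq0C : (q : ℂ) ≠ 0 := by exact_mod_cast hq.ne'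
  have hsq : Real.sqrt q * Real.sqrt q = q := Real.mul_self_sqrt hq.le
  have hPeval : ∀ w : ℂ, (P.map (algebraMap ℝ ℂ)).eval w =
      ∑ i ∈ Finset.range (n + 1), (b i : ℂ) * w ^ (n - i) * (w ^ 2 + (q : ℂ)) ^ i := by
    intro w
    simp only [hP, Polynomial.map_sum, Polynomial.map_mul, Polynomial.map_pow,
      Polynomial.map_add, Polynomial.map_C, Polynomial.map_X, Polynomial.eval_finset_sum,
      Polynomial.eval_mul, Polynomial.eval_pow, Polynomial.eval_add, Polynomial.eval_C,
      Polynomial.eval_X, Complex.coe_algebraMap]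
  have hQeval : ∀ z : ℂ, (Q.map (algebraMap ℝ ℂ)).eval z =
      ∑ i ∈ Finset.range (n + 1), (b i : ℂ) * z ^ i := by
    intro z
    simp only [hQ, Polynomial.map_sum, Polynomial.map_mul, Polynomial.map_pow,
      Polynomial.map_C, Polynomial.map_X, Polynomial.eval_finset_sum,
      Polynomial.eval_mul, Polynomial.eval_pow, Polynomial.eval_C,
      Polynomial.eval_X, Complex.coe_algebraMap]
  have hkey : ∀ w : ℂ, w ≠ 0 →
      (P.map (algebraMap ℝ ℂ)).eval w =
        w ^ n * (Q.map (algebraMap ℝ ℂ)).eval (w + (q : ℂ) / w) := by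
    intro w hw
    rw [hPeval, hQeval, Finset.mul_sum]
    refine Finset.sum_congr rfl fun i hi => ?_
    have hile : i ≤ n := Nat.lt_succ_iff.mp (Finset.mem_range.mp hi)
    have h1 : (w + (q : ℂ) / w) * w = w ^ 2 + (q : ℂ) := by field_simp
    calc (b i : ℂ) * w ^ (n - i) * (w ^ 2 + (q : ℂ)) ^ i
        = (b i : ℂ) * w ^ (n - i) * ((w + (q : ℂ) / w) * w) ^ i := by rw [h1]
      _ = w ^ (n - i) * w ^ i * ((b i : ℂ) * (w + (q : ℂ) / w) ^ i) := by
          rw [mul_pow]; ring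
      _ = w ^ n * ((b i : ℂ) * (w + (q : ℂ) / w) ^ i) := by
          rw [← pow_add, Nat.sub_add_cancel hile]
  constructor
  · -- forward
    intro h z hz
    obtain ⟨s, hs⟩ := IsAlgClosed.exists_pow_nat_eq (z ^ 2 - 4 * (q : ℂ)) (n := 2) (by norm_num)
    set w : ℂ := (z + s) / 2 with hwdef
    set w' : ℂ := (z - s) / 2 with hw'def
    have hww' : w * w' = (q : ℂ) := by
      rw [hwdef, hw'def]
      linear_combination (-1/4 : ℂ) * hs
    have hw0 : w ≠ 0 := fun h0 => hq0C (by rw [← hww', h0, zero_mul])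
    have hw'0 : w' ≠ 0 := fun h0 => hq0C (by rw [← hww', h0, mul_zero])
    have hdivw : (q : ℂ) / w = w' := by
      rw [eq_comm, eq_div_iff hw0, mul_comm, hww']
    have hdivw' : (q : ℂ) / w' = w := by
      rw [eq_comm, eq_div_iff hw'0, hww']
    have hsum : w + w' = z := by rw [hwdef, hw'def]; ring
    have habsw : ‖w‖ = Real.sqrt q := by
      apply h
      rw [hkey w hw0, hdivw, hsum, hz, mul_zero]
    have habsw' : ‖w'‖ = Real.sqrt q := by
      apply h
      rw [hkey w' hw'0, hdivw', add_comm w' w, hsum, hz, mul_zero]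
    have hnormSq : (Complex.normSq w : ℂ) = (q : ℂ) := by
      have : Complex.normSq w = q := by
        rw [← Complex.sq_norm, habsw, sq, hsq]
      exact_mod_cast this
    have hconj : starRingEnd ℂ w = w' := by
      apply mul_left_cancel₀ hw0
      rw [Complex.mul_conj, hnormSq, hww']
    refine ⟨2 * w.re, ?_, ?_, ?_⟩
    · rw [← hsum, ← hconj, Complex.add_conj]
    · have := Complex.abs_re_le_norm w
      rw [habsw] at this
      have h2 := abs_le.mp this
      linarith [h2.1]
    · have := Complex.abs_re_le_norm w
      rw [habsw] at this
      have h2 := abs_le.mp this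
      linarith [h2.2]
  · -- backward
    intro h w hw
    have hw0 : w ≠ 0 := by
      intro h0
      rw [h0, hPeval] at hw
      rw [Finset.sum_eq_single n] at hw
      · simp only [Nat.sub_self, pow_zero, mul_one, ne_eq] at hw
        have : (b n : ℂ) ≠ 0 := by exact_mod_cast hbn
        have hqn : ((0:ℂ) ^ 2 + (q:ℂ)) ^ n ≠ 0 := by
          apply pow_ne_zero
          simpa using hq0C
        exact (mul_ne_zero this hqn) hw
      · intro i hi hin
        have hlt : i < n := lt_of_le_of_ne (Nat.lt_succ_iff.mp (Finset.mem_range.mp hi)) hin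
        have : n - i ≠ 0 := Nat.sub_ne_zero_of_lt hlt
        simp [zero_pow this]
      · intro hn
        exact absurd (Finset.self_mem_range_succ n) hn
    have hQz : (Q.map (algebraMap ℝ ℂ)).eval (w + (q : ℂ) / w) = 0 := by
      have := hkey w hw0
      rw [hw] at this
      exact (mul_eq_zero.mp this.symm).resolve_left (pow_ne_zero n hw0)
    obtain ⟨x, hzx, hx1, hx2⟩ := h _ hQz
    have hquad : w ^ 2 + (q : ℂ) = (x : ℂ) * w := by
      have h1 : w + (q : ℂ) / w = (x : ℂ) := hzx
      field_simp at h1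
      linear_combination h1
    have hre : w.re ^ 2 - w.im ^ 2 + q = x * w.re := by
      have := congrArg Complex.re hquad
      simpa [pow_two, Complex.mul_re, Complex.mul_im, Complex.add_re] using this
    have him : 2 * w.re * w.im = x * w.im := by
      have := congrArg Complex.im hquad
      simp [pow_two, Complex.mul_re, Complex.mul_im, Complex.add_im] at this
      linarith
    have hns : Complex.normSq w = q := by
      rw [Complex.normSq_apply]
      by_cases him0 : w.im = 0
      · have hre0 : w.re ≠ 0 := by
          intro hc
          exact hw0 (Complex.ext hc him0)
        rw [him0] at hre ⊢
        rcases lt_trichotomy w.re 0 with hlt | heq | hgt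
        · have hle : (x : ℝ) * w.re ≤ (-(2 * Real.sqrt q)) * w.re := by
            apply mul_le_mul_of_nonpos_right hx1 hlt.le
          have h2 : (w.re + Real.sqrt q) ^ 2 ≤ 0 := by nlinarith
          have h3 : w.re + Real.sqrt q = 0 := by nlinarith [sq_nonneg (w.re + Real.sqrt q)]
          have : w.re = -Real.sqrt q := by linarith
          rw [this]; nlinarith
        · exact absurd heq hre0
        · have hle : (x : ℝ) * w.re ≤ (2 * Real.sqrt q) * w.re := by
            apply mul_le_mul_of_nonneg_right hx2 hgt.le
          have h2 : (w.re - Real.sqrt q) ^ 2 ≤ 0 := by nlinarith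
          have h3 : w.re - Real.sqrt q = 0 := by nlinarith [sq_nonneg (w.re - Real.sqrt q)]
          have : w.re = Real.sqrt q := by linarith
          rw [this]; nlinarith
      · have hx2re : x = 2 * w.re := by
          have := mul_right_cancel₀ him0 him
          linarith
        rw [hx2re] at hre
        nlinarith
    rw [Complex.norm_def, hns]
end

section
/- Let R(z) = Σ_{i=0}^n c_i z^i be a complex polynomial of degree n (c_n ≠ 0), with power sums s_j = Σ_k r_k^j where r_1, …, r_n are the complex roots of R counted with multiplicity. Fix j with 1 ≤ j ≤ n−1, and let c'_0, …, c'_{n−j} be complex numbers. Then the j-th power sum of the polynomial R(z) + Σ_{i=0}^{n−j} c'_i z^i (which still has degree n and leading coefficient c_n) equals s_j − j·c'_{n−j}/c_n. -/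
open Polynomial

lemma newton_multiset (s : Multiset ℂ) (k : ℕ) (hk : 0 < k) :
    (s.map (fun r => r ^ k)).sum = (-1) ^ (k + 1) * k * s.esymm k -
      ∑ a ∈ (Finset.HasAntidiagonal.antidiagonal k).filter (fun a => a.1 ∈ Set.Ioo 0 k),
        (-1) ^ a.1 * s.esymm a.1 * (s.map (fun r => r ^ a.2)).sum := by
  induction s using Quotient.inductionOn with
  | h l =>
    have key := congrArg (MvPolynomial.aeval (fun i : Fin l.length => l.get i))
      (MvPolynomial.psum_eq_mul_esymm_sub_sum (Fin l.length) ℂ k hk)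
    have huniv : (Finset.univ.val.map (fun i : Fin l.length => l.get i)) = (l : Multiset ℂ) := by
      rw [Fin.univ_val_map]
      simp [List.ofFn_get]
    have haev : ∀ m : ℕ, MvPolynomial.aeval (fun i : Fin l.length => l.get i)
        (MvPolynomial.psum (Fin l.length) ℂ m)
        = ((l : Multiset ℂ).map (fun r => r ^ m)).sum := by
      intro m
      rw [MvPolynomial.psum, map_sum, ← huniv, Multiset.map_map]
      simp [Finset.sum]
    have hes : ∀ m : ℕ, MvPolynomial.aeval (fun i : Fin l.length => l.get i)
        (MvPolynomial.esymm (Fin l.length) ℂ m) = (l : Multiset ℂ).esymm m := by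
      intro m
      rw [MvPolynomial.aeval_esymm_eq_multiset_esymm, huniv]
    rw [map_sub, map_mul, map_mul, map_sum] at key
    simp only [map_mul, map_pow, map_neg, map_one, map_natCast, haev, hes] at key
    exact key

theorem power_sum_of_perturbed_polynomial (n : ℕ) (c : ℕ → ℂ) (hcn : c n ≠ 0)
    (R : Polynomial ℂ) (hR : R = ∑ i ∈ Finset.range (n + 1), C (c i) * X ^ i)
    (j : ℕ) (hj1 : 1 ≤ j) (hjn : j ≤ n - 1)
    (c' : ℕ → ℂ) :
    ((R + ∑ i ∈ Finset.range (n - j + 1), C (c' i) * X ^ i).roots.map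
        (fun r : ℂ => r ^ j)).sum
      = (R.roots.map (fun r : ℂ => r ^ j)).sum - (j : ℂ) * c' (n - j) / c n := by
  have hjn' : j < n := by omega
  set P' : Polynomial ℂ := ∑ i ∈ Finset.range (n - j + 1), C (c' i) * X ^ i with hP'
  set Q : Polynomial ℂ := R + P' with hQ
  -- coefficients
  have hcoeffR : ∀ k, R.coeff k = if k ≤ n then c k else 0 := by
    intro k
    rw [hR, finset_sum_coeff]
    simp only [coeff_C_mul, coeff_X_pow, mul_ite, mul_one, mul_zero]
    rw [Finset.sum_ite_eq]
    simp [Finset.mem_range, Nat.lt_succ_iff]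
  have hcoeffP' : ∀ k, P'.coeff k = if k ≤ n - j then c' k else 0 := by
    intro k
    rw [hP', finset_sum_coeff]
    simp only [coeff_C_mul, coeff_X_pow, mul_ite, mul_one, mul_zero]
    rw [Finset.sum_ite_eq]
    simp [Finset.mem_range, Nat.lt_succ_iff]
  have hcoeffQ : ∀ k, Q.coeff k = R.coeff k + P'.coeff k := by intro k; simp [hQ]
  -- natDegree
  have hdegR : R.natDegree = n := by
    apply le_antisymm
    · rw [natDegree_le_iff_coeff_eq_zero]
      intro m hm
      rw [hcoeffR]
      simp [Nat.not_le.mpr hm]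
    · apply le_natDegree_of_ne_zero
      rw [hcoeffR]; simpa using hcn
  have hdegQ : Q.natDegree = n := by
    apply le_antisymm
    · rw [natDegree_le_iff_coeff_eq_zero]
      intro m hm
      rw [hcoeffQ, hcoeffR, hcoeffP']
      have h1 : ¬ m ≤ n := Nat.not_le.mpr hm
      have h2 : ¬ m ≤ n - j := by omega
      simp [h1, h2]
    · apply le_natDegree_of_ne_zero
      rw [hcoeffQ, hcoeffR, hcoeffP']
      have h2 : ¬ n ≤ n - j := by omega
      simpa [h2] using hcn
  have hleadR : R.leadingCoeff = c n := by
    rw [leadingCoeff, hdegR, hcoeffR]; simp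
  have hleadQ : Q.leadingCoeff = c n := by
    rw [leadingCoeff, hdegQ, hcoeffQ, hcoeffR, hcoeffP']
    have h2 : ¬ n ≤ n - j := by omega
    simp [h2]
  have hR0 : R ≠ 0 := fun h => hcn (by rw [← hleadR, h, leadingCoeff_zero])
  have hQ0 : Q ≠ 0 := fun h => hcn (by rw [← hleadQ, h, leadingCoeff_zero])
  -- roots card
  have hcardR : Multiset.card R.roots = n := by
    rw [← hdegR]; exact splits_iff_card_roots.mp (IsAlgClosed.splits R)
  have hcardQ : Multiset.card Q.roots = n := by
    rw [← hdegQ]; exact splits_iff_card_roots.mp (IsAlgClosed.splits Q)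
  -- esymm formulas
  have hesR : ∀ i ≤ n, R.roots.esymm i = (-1) ^ i * R.coeff (n - i) / c n := by
    intro i hi
    have h := Polynomial.coeff_eq_esymm_roots_of_card (by rw [hcardR, hdegR])
      (k := n - i) (by omega : n - i ≤ R.natDegree)
    rw [hdegR] at h
    have hni : n - (n - i) = i := by omega
    rw [hni, hleadR] at h
    have hone : ((-1:ℂ)) ^ i * (-1) ^ i = 1 := by
      rw [← pow_add]; exact Even.neg_one_pow ⟨i, rfl⟩
    rw [h]
    field_simp
    linear_combination (-(R.roots.esymm i)) * hone
  have hesQ : ∀ i ≤ n, Q.roots.esymm i = (-1) ^ i * Q.coeff (n - i) / c n := by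
    intro i hi
    have h := Polynomial.coeff_eq_esymm_roots_of_card (by rw [hcardQ, hdegQ])
      (k := n - i) (by omega : n - i ≤ Q.natDegree)
    rw [hdegQ] at h
    have hni : n - (n - i) = i := by omega
    rw [hni, hleadQ] at h
    have hone : ((-1:ℂ)) ^ i * (-1) ^ i = 1 := by
      rw [← pow_add]; exact Even.neg_one_pow ⟨i, rfl⟩
    rw [h]
    field_simp
    linear_combination (-(Q.roots.esymm i)) * hone
  -- esymm equal below j
  have hesymm_lt : ∀ i < j, Q.roots.esymm i = R.roots.esymm i := by
    intro i hi
    rw [hesQ i (by omega), hesR i (by omega), hcoeffQ, hcoeffP']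
    have h2 : ¬ n - i ≤ n - j := by omega
    simp [h2]
  have hesymm_j : Q.roots.esymm j = R.roots.esymm j + (-1) ^ j * c' (n - j) / c n := by
    rw [hesQ j (by omega), hesR j (by omega), hcoeffQ, hcoeffP']
    simp only [le_refl, if_true]
    field_simp
  -- power sums equal below j
  have hps : ∀ k, k < j → (Q.roots.map (fun r => r ^ k)).sum
      = (R.roots.map (fun r => r ^ k)).sum := by
    intro k
    induction k using Nat.strong_induction_on with
    | _ k ih =>
      intro hkj
      rcases Nat.eq_zero_or_pos k with hk0 | hk0
      · subst hk0
        simp [Multiset.map_const', Multiset.sum_replicate, hcardR, hcardQ]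
      · rw [newton_multiset _ _ hk0, newton_multiset _ _ hk0, hesymm_lt k hkj]
        congr 1
        apply Finset.sum_congr rfl
        intro a ha
        simp only [Finset.mem_filter, Finset.HasAntidiagonal.mem_antidiagonal, Set.mem_Ioo] at ha
        rw [hesymm_lt a.1 (by omega), ih a.2 (by omega) (by omega)]
  -- final
  show (Q.roots.map (fun r => r ^ j)).sum = _
  have hj0 : 0 < j := hj1
  rw [newton_multiset _ _ hj0, newton_multiset _ _ hj0, hesymm_j]
  have hsum : ∑ a ∈ (Finset.HasAntidiagonal.antidiagonal j).filter (fun a => a.1 ∈ Set.Ioo 0 j),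
        (-1) ^ a.1 * Q.roots.esymm a.1 * (Q.roots.map (fun r => r ^ a.2)).sum
      = ∑ a ∈ (Finset.HasAntidiagonal.antidiagonal j).filter (fun a => a.1 ∈ Set.Ioo 0 j),
        (-1) ^ a.1 * R.roots.esymm a.1 * (R.roots.map (fun r => r ^ a.2)).sum := by
    apply Finset.sum_congr rfl
    intro a ha
    simp only [Finset.mem_filter, Finset.HasAntidiagonal.mem_antidiagonal, Set.mem_Ioo] at ha
    rw [hesymm_lt a.1 (by omega), hps a.2 (by omega)]
  rw [hsum]
  have hsign : ((-1 : ℂ)) ^ (j + 1) * (-1) ^ j = -1 := by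
    rw [← pow_add]
    have : j + 1 + j = 2 * j + 1 := by ring
    rw [this, pow_succ, pow_mul]
    simp
  linear_combination ((j : ℂ) * c' (n - j) / c n) * hsign
end

section
/- Let q be a positive real number, let r_1, …, r_n be real numbers in [−2√q, 2√q] with power sums s_j = Σ_k r_k^j, and set s''_i = Σ_{k=0}^i C(i,k)·(2√q)^{i−k}·(−1)^k·s_k (so s''_i = Σ_k (2√q − r_k)^i). Then s''_i · s''_{i−2} − (s''_{i−1})² ≥ 0 for all i ≥ 2, and s''_i − 4√q·s''_{i−1} ≤ 0 for all i ≥ 1. -/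
theorem reflected_power_sum_inequalities (q : ℝ) (hq : 0 < q) (n : ℕ) (r : Fin n → ℝ)
    (hr : ∀ k, r k ∈ Set.Icc (-(2 * Real.sqrt q)) (2 * Real.sqrt q))
    (s'' : ℕ → ℝ)
    (hs'' : ∀ i, s'' i = ∑ k ∈ Finset.range (i + 1),
        (Nat.choose i k : ℝ) * (2 * Real.sqrt q) ^ (i - k) * (-1) ^ k * (∑ l, r l ^ k)) :
    (∀ i, 2 ≤ i → s'' i * s'' (i - 2) - (s'' (i - 1)) ^ 2 ≥ 0) ∧
      (∀ i, 1 ≤ i → s'' i - 4 * Real.sqrt q * s'' (i - 1) ≤ 0) := by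
  set c : ℝ := 2 * Real.sqrt q with hc
  have key : ∀ i, s'' i = ∑ l, (c - r l) ^ i := by
    intro i
    rw [hs'']
    simp only [Finset.mul_sum]
    rw [Finset.sum_comm]
    refine Finset.sum_congr rfl fun l _ => ?_
    have : c - r l = (-r l) + c := by ring
    rw [this, add_pow]
    refine Finset.sum_congr rfl fun k _ => ?_
    rw [neg_pow]
    ring
  have ht : ∀ l, 0 ≤ c - r l := fun l => by
    have := (hr l).2; linarith
  have htc : ∀ l, c - r l ≤ 4 * Real.sqrt q := fun l => by
    have := (hr l).1
    have hcq : (0:ℝ) ≤ Real.sqrt q := Real.sqrt_nonneg q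
    simp only [hc] at *
    linarith
  constructor
  · intro i hi
    rw [key, key, key]
    have h1 : i - 1 - 1 = i - 2 := by omega
    have h2 : (i - 1) + (i - 1) = i + (i - 2) := by omega
    have cs := Finset.sum_mul_sq_le_sq_mul_sq Finset.univ
      (fun l => Real.sqrt ((c - r l) ^ i)) (fun l => Real.sqrt ((c - r l) ^ (i - 2)))
    have e1 : ∀ l : Fin n, Real.sqrt ((c - r l) ^ i) * Real.sqrt ((c - r l) ^ (i - 2))
        = (c - r l) ^ (i - 1) := by
      intro l
      rw [← Real.sqrt_mul (pow_nonneg (ht l) i), ← pow_add]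
      have : i + (i - 2) = (i - 1) * 2 := by omega
      rw [this, pow_mul, Real.sqrt_sq (pow_nonneg (ht l) _)]
    have e2 : ∀ (j : ℕ) (l : Fin n), Real.sqrt ((c - r l) ^ j) ^ 2 = (c - r l) ^ j := by
      intro j l
      exact Real.sq_sqrt (pow_nonneg (ht l) j)
    simp only [e1, e2] at cs
    linarith
  · intro i hi
    rw [key, key, Finset.mul_sum, ← Finset.sum_sub_distrib]
    apply Finset.sum_nonpos
    intro l _
    have : (c - r l) ^ i = (c - r l) * (c - r l) ^ (i - 1) := by
      rw [← pow_succ']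
      congr 1; omega
    rw [this]
    have h1 : (c - r l) * (c - r l) ^ (i-1) ≤ 4 * Real.sqrt q * (c - r l) ^ (i-1) :=
      mul_le_mul_of_nonneg_right (htc l) (pow_nonneg (ht l) _)
    linarith
end

section
/- Let q be a positive real number, let R be a real polynomial of degree at least 2, and let c be a real number such that R(z) + c has all roots real and lying in [−2√q, 2√q]. Let T = gcd(R'(z), (z² − 4q)·R''(z)), and suppose T is nonconstant. Then every complex root r of T is real, lies in [−2√q, 2√q], and satisfies R(r) + c = 0. (In particular: if r = ±2√q then R(±2√q) + c = 0, and if −2√q < r < 2√q then r is a multiple root of R' and a root of R + c.) -/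
open Polynomial

private lemma msum_pos (s : Multiset ℝ) (h : ∀ x ∈ s, 0 < x) (hs : s ≠ 0) : 0 < s.sum := by
  induction s using Multiset.induction with
  | empty => simp at hs
  | cons a t ih =>
    rw [Multiset.sum_cons]
    have ha : 0 < a := h a (Multiset.mem_cons_self a t)
    have ht : 0 ≤ t.sum := Multiset.sum_nonneg fun x hx => (h x (Multiset.mem_cons_of_mem hx)).le
    linarith

private lemma im_msum (s : Multiset ℂ) : s.sum.im = (s.map Complex.im).sum := by
  simpa using map_multiset_sum Complex.imAddGroupHom s

private lemma re_msum (s : Multiset ℂ) : s.sum.re = (s.map Complex.re).sum := by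
  simpa using map_multiset_sum Complex.reAddGroupHom s

private lemma logderiv (s : Multiset ℂ) (r : ℂ) (h : ∀ x ∈ s, r ≠ x) :
    (derivative (s.map (fun x => X - C x)).prod).eval r
      = ((s.map (fun x => X - C x)).prod.eval r) * (s.map (fun x => (r - x)⁻¹)).sum ∧
    (derivative (derivative (s.map (fun x => X - C x)).prod)).eval r
      = ((s.map (fun x => X - C x)).prod.eval r) *
        ((s.map (fun x => (r - x)⁻¹)).sum ^ 2 - (s.map (fun x => ((r - x)⁻¹) ^ 2)).sum) := by
  induction s using Multiset.induction with
  | empty => simp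
  | cons a t ih =>
    obtain ⟨ih1, ih2⟩ := ih (fun x hx => h x (Multiset.mem_cons_of_mem hx))
    have hra : r - a ≠ 0 := sub_ne_zero.mpr (h a (Multiset.mem_cons_self a t))
    simp only [Multiset.map_cons, Multiset.prod_cons, Multiset.sum_cons,
      derivative_mul, derivative_add, derivative_sub, derivative_X, derivative_C, sub_zero,
      one_mul, eval_add, eval_mul, eval_sub, eval_X, eval_C, ih1, ih2]
    constructor
    · field_simp
    · field_simp; ring

theorem gcd_roots_are_roots (q : ℝ) (hq : 0 < q)
    (R : Polynomial ℝ) (hdeg : 2 ≤ R.natDegree) (c : ℝ)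
    (hroots : ∀ z : ℂ, ((R + C c).map (algebraMap ℝ ℂ)).eval z = 0 →
      ∃ x : ℝ, z = (x : ℂ) ∧ -(2 * Real.sqrt q) ≤ x ∧ x ≤ 2 * Real.sqrt q)
    (T : Polynomial ℝ)
    (hT : T = EuclideanDomain.gcd R.derivative
      ((X ^ 2 - C (4 * q)) * R.derivative.derivative))
    (hTnonconst : 0 < T.natDegree) :
    ∀ z : ℂ, (T.map (algebraMap ℝ ℂ)).eval z = 0 →
      ∃ x : ℝ, z = (x : ℂ) ∧ -(2 * Real.sqrt q) ≤ x ∧ x ≤ 2 * Real.sqrt q ∧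
        R.eval x + c = 0 := by
  intro z hz
  set f := algebraMap ℝ ℂ with hf
  set P := R + C c with hP
  have hPdeg : P.natDegree = R.natDegree := natDegree_add_C
  have hPne : P ≠ 0 := by
    intro h0; rw [h0, natDegree_zero] at hPdeg; omega
  set Pc := P.map f with hPc
  have hinj : Function.Injective f := (algebraMap ℝ ℂ).injective
  have hPcdeg : Pc.natDegree = R.natDegree := by
    rw [hPc, natDegree_map_eq_of_injective hinj, hPdeg]
  have hPcne : Pc ≠ 0 := (Polynomial.map_ne_zero_iff hinj).mpr hPne
  set s := Pc.roots with hs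
  have hsplit : Pc.Splits := IsAlgClosed.splits Pc
  have hprod : Pc = C Pc.leadingCoeff * (s.map (fun a => X - C a)).prod :=
    hsplit.eq_prod_roots
  have hcard : s.card = R.natDegree := by
    rw [hs, ← hPcdeg]; exact (splits_iff_card_roots.mp hsplit)
  have hsne : s ≠ 0 := by
    intro h0; rw [h0, Multiset.card_zero] at hcard; omega
  have hmem : ∀ x ∈ s, Pc.eval x = 0 := fun x hx => ((mem_roots hPcne).mp hx)
  -- divisibility facts
  have hd1 : T ∣ R.derivative := hT ▸ EuclideanDomain.gcd_dvd_left _ _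
  have hd2 : T ∣ (X ^ 2 - C (4 * q)) * R.derivative.derivative :=
    hT ▸ EuclideanDomain.gcd_dvd_right _ _
  have hz1 : (R.derivative.map f).eval z = 0 := by
    obtain ⟨u, hu⟩ := Polynomial.map_dvd f hd1
    rw [hu, eval_mul, hz, zero_mul]
  have hz2 : (z ^ 2 - ((4 * q : ℝ) : ℂ)) * ((R.derivative.derivative.map f).eval z) = 0 := by
    obtain ⟨u, hu⟩ := Polynomial.map_dvd f hd2
    have h2 : (((X ^ 2 - C (4 * q)) * R.derivative.derivative).map f).eval z = 0 := by
      rw [hu, eval_mul, hz, zero_mul]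
    simpa [Polynomial.map_mul, Polynomial.map_sub, Polynomial.map_pow, hf] using h2
  -- the key claim
  have hkey : Pc.eval z = 0 := by
    by_contra hPz
    have hzx : ∀ x ∈ s, z ≠ x := fun x hx he => hPz (by rw [he]; exact hmem x hx)
    obtain ⟨hA', hB'⟩ := logderiv s z hzx
    set Q := (s.map (fun a => X - C a)).prod with hQ
    have hQz : Q.eval z ≠ 0 := by
      intro h0; apply hPz; rw [hprod, eval_mul, h0, mul_zero]
    have hlead : Pc.leadingCoeff ≠ 0 := leadingCoeff_ne_zero.mpr hPcne
    set A := (s.map (fun x => (z - x)⁻¹)).sum with hAdef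
    set B := (s.map (fun x => ((z - x)⁻¹) ^ 2)).sum with hBdef
    have hD1 : derivative Pc = R.derivative.map f := by
      rw [hPc, derivative_map, hP]; simp
    have e1 : (derivative Pc).eval z = Pc.leadingCoeff * (Q.eval z * A) := by
      conv_lhs => rw [hprod]
      rw [derivative_C_mul, eval_C_mul, hA']
    have hA : A = 0 := by
      have h0 : Pc.leadingCoeff * (Q.eval z * A) = 0 := by
        rw [← e1, hD1, hz1]
      rcases mul_eq_zero.mp h0 with h | h
      · exact absurd h hlead
      rcases mul_eq_zero.mp h with h | h
      · exact absurd h hQz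
      · exact h
    -- each root is real, within bounds
    have hreal : ∀ x ∈ s, ∃ ξ : ℝ, x = (ξ : ℂ) ∧ -(2 * Real.sqrt q) ≤ ξ ∧ ξ ≤ 2 * Real.sqrt q :=
      fun x hx => hroots x (hmem x hx)
    -- z is real
    have him : z.im = 0 := by
      by_contra hv
      have hA0 : (0 : ℝ) < (s.map (fun x => -z.im * ((z - x)⁻¹).im)).sum := by
        apply msum_pos _ _ (by simpa using hsne)
        intro y hy
        rw [Multiset.mem_map] at hy
        obtain ⟨x, hx, rfl⟩ := hy
        obtain ⟨ξ, rfl, _, _⟩ := hreal x hx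
        have hne : z - (ξ : ℂ) ≠ 0 := sub_ne_zero.mpr (hzx _ hx)
        have hnsq : 0 < Complex.normSq (z - (ξ : ℂ)) := Complex.normSq_pos.mpr hne
        rw [Complex.inv_im]
        have : (z - (ξ : ℂ)).im = z.im := by simp
        rw [this]
        rw [div_eq_mul_inv]
        have h1 : 0 < z.im * z.im * (Complex.normSq (z - (ξ : ℂ)))⁻¹ :=
          mul_pos (mul_self_pos.mpr hv) (inv_pos.mpr hnsq)
        have h2 : -z.im * (-z.im * (Complex.normSq (z - (ξ : ℂ)))⁻¹)
            = z.im * z.im * (Complex.normSq (z - (ξ : ℂ)))⁻¹ := by ring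
        rw [h2]
        exact h1
      have : (s.map (fun x => -z.im * ((z - x)⁻¹).im)).sum = 0 := by
        rw [Multiset.sum_map_mul_left]
        have : (s.map (fun x => ((z - x)⁻¹).im)).sum = A.im := by
          rw [hAdef, im_msum, Multiset.map_map]; rfl
        rw [this, hA]
        simp
      rw [this] at hA0
      exact lt_irrefl _ hA0
    have hzu : z = ((z.re : ℝ) : ℂ) := by
      apply Complex.ext <;> simp [him]
    set u := z.re with hu
    -- real evaluations of terms
    have hterm : ∀ x ∈ s, ∃ ξ : ℝ, x = (ξ : ℂ) ∧ ξ ≠ u ∧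
        -(2 * Real.sqrt q) ≤ ξ ∧ ξ ≤ 2 * Real.sqrt q ∧
        (z - x)⁻¹ = (((u - ξ)⁻¹ : ℝ) : ℂ) := by
      intro x hx
      obtain ⟨ξ, rfl, h1, h2⟩ := hreal x hx
      refine ⟨ξ, rfl, ?_, h1, h2, ?_⟩
      · intro hequ; exact hzx _ hx (by rw [hzu, hequ])
      · rw [hzu]; push_cast; ring_nf
    rcases mul_eq_zero.mp hz2 with hcase | hcase
    · -- z = ±2√q
      have hcase' : ((u : ℂ)) ^ 2 - ((4 * q : ℝ) : ℂ) = 0 := by rw [← hzu]; exact hcase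
      have hu2 : u ^ 2 = 4 * q := by
        have h3 : ((u : ℂ)) ^ 2 = ((4 * q : ℝ) : ℂ) := sub_eq_zero.mp hcase'
        exact_mod_cast h3
      have h4q : (2 * Real.sqrt q) ^ 2 = 4 * q := by
        rw [mul_pow, Real.sq_sqrt hq.le]; ring
      have hpm : u = 2 * Real.sqrt q ∨ u = -(2 * Real.sqrt q) := by
        have : (u - 2 * Real.sqrt q) * (u + 2 * Real.sqrt q) = 0 := by nlinarith
        rcases mul_eq_zero.mp this with h | h
        · left; linarith
        · right; linarith
      have hAre : (s.map (fun x => ((z - x)⁻¹).re)).sum = 0 := by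
        have : (s.map (fun x => ((z - x)⁻¹).re)).sum = A.re := by
          rw [hAdef, re_msum, Multiset.map_map]; rfl
        rw [this, hA]; simp
      rcases hpm with hpm | hpm
      · have hpos : (0:ℝ) < (s.map (fun x => ((z - x)⁻¹).re)).sum := by
          apply msum_pos _ _ (by simpa using hsne)
          intro y hy
          rw [Multiset.mem_map] at hy
          obtain ⟨x, hx, rfl⟩ := hy
          obtain ⟨ξ, rfl, hne, _, hle, he⟩ := hterm x hx
          rw [he]
          simp only [Complex.ofReal_re]
          have hlt : ξ < u := lt_of_le_of_ne (hpm ▸ hle) hne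
          exact inv_pos.mpr (by linarith)
        linarith [hAre]
      · have hpos : (0:ℝ) < (s.map (fun x => -((z - x)⁻¹).re)).sum := by
          apply msum_pos _ _ (by simpa using hsne)
          intro y hy
          rw [Multiset.mem_map] at hy
          obtain ⟨x, hx, rfl⟩ := hy
          obtain ⟨ξ, rfl, hne, hge, _, he⟩ := hterm x hx
          rw [he]
          simp only [Complex.ofReal_re]
          have hlt : u < ξ := lt_of_le_of_ne (hpm ▸ hge) (Ne.symm hne)
          have hneg : u - ξ < 0 := by linarith
          have := inv_lt_zero.mpr hneg
          linarith
        have hneg : (s.map (fun x => -((z - x)⁻¹).re)).sum = 0 := by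
          have hfe : (fun x : ℂ => -((z - x)⁻¹).re) = (fun x => (-1 : ℝ) * ((z - x)⁻¹).re) := by
            funext x; ring
          rw [hfe, Multiset.sum_map_mul_left, hAre, mul_zero]
        linarith
    · -- R''(z) = 0 : use second logderiv
      have e2 : (derivative (derivative Pc)).eval z
          = Pc.leadingCoeff * (Q.eval z * (A ^ 2 - B)) := by
        conv_lhs => rw [hprod]
        rw [derivative_C_mul, derivative_C_mul, eval_C_mul, hB']
      have hD2 : derivative (derivative Pc) = R.derivative.derivative.map f := by
        rw [hD1, derivative_map]
      have hB0 : Pc.leadingCoeff * (Q.eval z * (A ^ 2 - B)) = 0 := by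
        rw [← e2, hD2, hcase]
      have hB : B = 0 := by
        rcases mul_eq_zero.mp hB0 with h | h
        · exact absurd h hlead
        rcases mul_eq_zero.mp h with h | h
        · exact absurd h hQz
        · rw [hA] at h; simpa using h
      have hBre : (s.map (fun x => (((z - x)⁻¹) ^ 2).re)).sum = 0 := by
        have : (s.map (fun x => (((z - x)⁻¹) ^ 2).re)).sum = B.re := by
          rw [hBdef, re_msum, Multiset.map_map]; rfl
        rw [this, hB]; simp
      have hpos : (0:ℝ) < (s.map (fun x => (((z - x)⁻¹) ^ 2).re)).sum := by
        apply msum_pos _ _ (by simpa using hsne)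
        intro y hy
        rw [Multiset.mem_map] at hy
        obtain ⟨x, hx, rfl⟩ := hy
        obtain ⟨ξ, rfl, hne, _, _, he⟩ := hterm x hx
        rw [he]
        have h1 : ((((u - ξ)⁻¹ : ℝ) : ℂ)) ^ 2 = ((((u - ξ)⁻¹ ^ 2 : ℝ)) : ℂ) := by push_cast; ring
        rw [h1]
        simp only [Complex.ofReal_re]
        have : u - ξ ≠ 0 := sub_ne_zero.mpr (Ne.symm hne)
        positivity
      linarith
  -- conclude
  obtain ⟨x, hx1, hx2, hx3⟩ := hroots z hkey
  refine ⟨x, hx1, hx2, hx3, ?_⟩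
  have hev : Pc.eval ((x : ℝ) : ℂ) = f (P.eval x) := by
    rw [hPc, eval_map]
    exact eval₂_at_apply f x
  rw [hx1] at hkey
  rw [hev] at hkey
  have : P.eval x = 0 := hinj (by simpa using hkey)
  simpa [hP] using this
end

section
/- Let q be a positive real number and let R be a real polynomial of degree d ≥ 1 with positive leading coefficient such that R' has all roots real and lying in [−2√q, 2√q]. Let x_1 ≤ ⋯ ≤ x_{d−1} be the roots of R' counted with multiplicity, set x_0 = −2√q and x_d = 2√q, and put y_i = R(x_i) for i = 0, …, d. Then for a real number c, the polynomial R(z) + c has all roots real and lying in [−2√q, 2√q] if and only if y_{d−2i} + c ≥ 0 for all integers i with 0 ≤ i ≤ ⌊d/2⌋ and y_{d−1−2i} + c ≤ 0 for all integers i with 0 ≤ i ≤ ⌊(d−1)/2⌋. -/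
set_option maxHeartbeats 1000000

open Polynomial


lemma card_filter_index_le (lo hi lo' hi' : ℕ) (p : ℕ → Prop) [DecidablePred p]
    (h : ∀ i, lo ≤ i → i ≤ hi → p i → lo' ≤ i ∧ i ≤ hi') :
    Multiset.card (((Finset.Icc lo hi).val).filter p) ≤ hi' + 1 - lo' := by
  have h1 : ((Finset.Icc lo hi).val).filter p ≤ (Finset.Icc lo' hi').val := by
    rw [Multiset.le_iff_count]
    intro a
    rw [Multiset.count_filter]
    split_ifs with hpa
    · by_cases ha : a ∈ Finset.Icc lo hi
      · have h2 := h a (Finset.mem_Icc.1 ha).1 (Finset.mem_Icc.1 ha).2 hpa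
        have ha' : a ∈ Finset.Icc lo' hi' := Finset.mem_Icc.2 h2
        have hc1 : Multiset.count a (Finset.Icc lo hi).val ≤ 1 :=
          Multiset.nodup_iff_count_le_one.1 (Finset.Icc lo hi).nodup a
        have hc2 : 1 ≤ Multiset.count a (Finset.Icc lo' hi').val :=
          Multiset.count_pos.2 (Finset.mem_def.1 ha')
        omega
      · have : Multiset.count a (Finset.Icc lo hi).val = 0 :=
          Multiset.count_eq_zero_of_notMem (fun hm => ha (Finset.mem_def.2 hm))
        rw [this]
        exact Nat.zero_le _
    · exact Nat.zero_le _
  have h2 := Multiset.card_le_card h1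
  have h3 : Multiset.card (Finset.Icc lo' hi').val = hi' + 1 - lo' := Nat.card_Icc lo' hi'
  omega

lemma card_filter_index_ge (lo hi lo' hi' : ℕ) (p : ℕ → Prop) [DecidablePred p]
    (hlo : lo ≤ lo') (hhi : hi' ≤ hi)
    (h : ∀ i, lo' ≤ i → i ≤ hi' → p i) :
    hi' + 1 - lo' ≤ Multiset.card (((Finset.Icc lo hi).val).filter p) := by
  have h1 : (Finset.Icc lo' hi').val ≤ ((Finset.Icc lo hi).val).filter p := by
    rw [Multiset.le_iff_count]
    intro a
    rw [Multiset.count_filter]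
    by_cases ha : a ∈ Finset.Icc lo' hi'
    · have h2 := Finset.mem_Icc.1 ha
      rw [if_pos (h a h2.1 h2.2)]
      have hc1 : Multiset.count a (Finset.Icc lo' hi').val ≤ 1 :=
        Multiset.nodup_iff_count_le_one.1 (Finset.Icc lo' hi').nodup a
      have hc2 : 1 ≤ Multiset.count a (Finset.Icc lo hi).val :=
        Multiset.count_pos.2 (Finset.mem_def.1 (Finset.mem_Icc.2 ⟨by omega, by omega⟩))
      omega
    · have : Multiset.count a (Finset.Icc lo' hi').val = 0 :=
        Multiset.count_eq_zero_of_notMem (fun hm => ha (Finset.mem_def.2 hm))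
      rw [this]
      exact Nat.zero_le _
  have h2 := Multiset.card_le_card h1
  have h3 : Multiset.card (Finset.Icc lo' hi').val = hi' + 1 - lo' := Nat.card_Icc lo' hi'
  omega

lemma sum_count_le_card (F : Finset ℝ) (m : Multiset ℝ) :
    ∑ u ∈ F, m.count u ≤ Multiset.card m := by
  classical
  have h1 : ∑ u ∈ F, m.count u = ∑ u ∈ F ∩ m.toFinset, m.count u := by
    refine (Finset.sum_subset Finset.inter_subset_left ?_).symm
    intro u hu hu2
    have : u ∉ m.toFinset := fun h => hu2 (Finset.mem_inter.2 ⟨hu, h⟩)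
    simpa [Multiset.count_eq_zero] using fun h => this (Multiset.mem_toFinset.2 h)
  rw [h1, ← Multiset.toFinset_sum_count_eq m]
  exact Finset.sum_le_sum_of_subset Finset.inter_subset_right

lemma card_roots_filter_le_derivative (p : Polynomial ℝ) (P : ℝ → Prop) [DecidablePred P]
    (hP : ∀ ⦃u v w : ℝ⦄, P u → P w → u < v → v < w → P v) :
    Multiset.card (p.roots.filter P) ≤ Multiset.card ((derivative p).roots.filter P) + 1 := by
  classical
  rcases eq_or_ne (derivative p) 0 with hp' | hp'
  · rcases eq_or_ne p 0 with h0 | h0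
    · simp [h0]
    · obtain ⟨a, ha⟩ : ∃ a, p = C a := ⟨p.coeff 0, eq_C_of_derivative_eq_zero hp'⟩
      simp [ha, roots_C]
  have hp : p ≠ 0 := by rintro rfl; simp at hp'
  set F : Finset ℝ := p.roots.toFinset.filter P with hF
  set F' : Finset ℝ := (derivative p).roots.toFinset.filter P with hF'
  have key : F.card ≤ (F' \ F).card + 1 := by
    refine Finset.card_le_diff_of_interleaved fun u hu v hv huv _ => ?_
    rw [hF, Finset.mem_filter, Multiset.mem_toFinset, mem_roots hp] at hu hv
    obtain ⟨z, hz1, hz2⟩ := exists_deriv_eq_zero huv p.continuousOn (hu.1.trans hv.1.symm)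
    refine ⟨z, ?_, hz1.1, hz1.2⟩
    rw [hF', Finset.mem_filter, Multiset.mem_toFinset, mem_roots hp']
    exact ⟨by rw [IsRoot, ← p.deriv]; exact hz2, hP hu.2 hv.2 hz1.1 hz1.2⟩
  calc Multiset.card (p.roots.filter P)
      = ∑ u ∈ F, (p.roots.filter P).count u := by
        rw [← Multiset.toFinset_sum_count_eq, Multiset.toFinset_filter]
    _ = ∑ u ∈ F, ((p.rootMultiplicity u - 1) + 1) := by
        refine Finset.sum_congr rfl (fun u hu => ?_)
        rw [Multiset.count_filter, if_pos (Finset.mem_filter.1 hu).2, count_roots]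
        have : p.rootMultiplicity u ≠ 0 := by
          have hm := (Finset.mem_filter.1 hu).1
          rw [Multiset.mem_toFinset] at hm
          have h2 := Multiset.count_pos.2 hm
          rw [count_roots] at h2
          omega
        omega
    _ = (∑ u ∈ F, (p.rootMultiplicity u - 1)) + F.card := by
        rw [Finset.sum_add_distrib, Finset.card_eq_sum_ones]
    _ ≤ (∑ u ∈ F, (derivative p).rootMultiplicity u) + ((F' \ F).card + 1) :=
        add_le_add (Finset.sum_le_sum fun u _ =>
          rootMultiplicity_sub_one_le_derivative_rootMultiplicity p u) key
    _ ≤ (∑ u ∈ F, ((derivative p).roots.filter P).count u)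
        + ((∑ u ∈ F' \ F, ((derivative p).roots.filter P).count u) + 1) := by
        refine add_le_add (Finset.sum_le_sum fun u hu => ?_) (Nat.add_le_add_right ?_ 1)
        · rw [Multiset.count_filter, if_pos (Finset.mem_filter.1 hu).2, count_roots]
        · rw [Finset.card_eq_sum_ones]
          refine Finset.sum_le_sum fun u hu => ?_
          have hu' := (Finset.mem_sdiff.1 hu).1
          rw [hF', Finset.mem_filter, Multiset.mem_toFinset] at hu'
          rw [Multiset.count_filter, if_pos hu'.2]
          exact Multiset.count_pos.2 hu'.1
    _ = (∑ u ∈ F ∪ (F' \ F), ((derivative p).roots.filter P).count u) + 1 := by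
        rw [← add_assoc, Finset.sum_union Finset.disjoint_sdiff]
    _ ≤ Multiset.card ((derivative p).roots.filter P) + 1 :=
        Nat.add_le_add_right (sum_count_le_card _ _) 1

lemma sign_prod_aux (u : ℝ) (s : Multiset ℝ) (h : ∀ z ∈ s, z ≠ u) :
    0 < (-1 : ℝ) ^ (Multiset.card (s.filter (fun z => u < z))) * (s.map (fun z => u - z)).prod := by
  classical
  induction s using Multiset.induction_on with
  | empty => simp
  | cons a s ih =>
    have ha : a ≠ u := h a (Multiset.mem_cons_self a s)
    have H := ih (fun z hz => h z (Multiset.mem_cons_of_mem hz))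
    rw [Multiset.filter_cons, Multiset.map_cons, Multiset.prod_cons]
    by_cases hau : u < a
    · rw [if_pos hau]
      rw [Multiset.card_add, Multiset.card_singleton, add_comm 1, pow_succ]
      have hpos : 0 < a - u := by linarith
      nlinarith [H]
    · rw [if_neg hau]
      have hpos : 0 < u - a := by
        rcases lt_or_eq_of_le (not_lt.1 hau) with h' | h'
        · linarith
        · exact absurd h' ha
      rw [zero_add]
      nlinarith [H]

lemma filter_card_helper (s : Multiset ℝ) (p q r : ℝ → Prop)
    [DecidablePred p] [DecidablePred q] [DecidablePred r]
    (hpq : ∀ z, p z → ¬ q z) (hpr : ∀ z, p z → r z) (hqr : ∀ z, q z → r z) :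
    Multiset.card (s.filter p) + Multiset.card (s.filter q) ≤ Multiset.card (s.filter r) := by
  rw [← Multiset.card_add, Multiset.filter_add_filter]
  have h1 : s.filter (fun a => p a ∧ q a) = 0 :=
    Multiset.filter_eq_nil.2 (fun a _ ha => (hpq a ha.1 ha.2))
  rw [h1, add_zero]
  exact Multiset.card_le_card
    (Multiset.monotone_filter_right s (fun z hz => hz.elim (hpr z) (hqr z)))

theorem shift_root_criterion (q : ℝ) (hq : 0 < q) (d : ℕ) (hd : 1 ≤ d)
    (R : Polynomial ℝ) (hdeg : R.natDegree = d) (hlead : 0 < R.leadingCoeff)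
    -- R' has all roots real and lying in [-2√q, 2√q]
    (hroots' : ∀ z : ℂ, (R.derivative.map (algebraMap ℝ ℂ)).eval z = 0 →
      ∃ t : ℝ, z = (t : ℂ) ∧ -(2 * Real.sqrt q) ≤ t ∧ t ≤ 2 * Real.sqrt q)
    (x : ℕ → ℝ) (hx0 : x 0 = -(2 * Real.sqrt q)) (hxd : x d = 2 * Real.sqrt q)
    -- x₁ ≤ ⋯ ≤ x_{d-1} are the roots of R' counted with multiplicity
    (hmono : ∀ i j : ℕ, 1 ≤ i → i ≤ j → j ≤ d - 1 → x i ≤ x j)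
    (hxroots : (Finset.Icc 1 (d - 1)).val.map x = R.derivative.roots)
    (c : ℝ) :
    (∀ z : ℂ, ((R + C c).map (algebraMap ℝ ℂ)).eval z = 0 →
        ∃ t : ℝ, z = (t : ℂ) ∧ -(2 * Real.sqrt q) ≤ t ∧ t ≤ 2 * Real.sqrt q) ↔
      ((∀ i : ℕ, i ≤ d / 2 → 0 ≤ R.eval (x (d - 2 * i)) + c) ∧
        (∀ i : ℕ, i ≤ (d - 1) / 2 → R.eval (x (d - 1 - 2 * i)) + c ≤ 0)) := by
  classical
  have hsq : 0 < Real.sqrt q := Real.sqrt_pos.2 hq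
  set b := 2 * Real.sqrt q with hbdef
  have hab : -b < b := by rw [hbdef]; linarith
  set S := R + C c with hSdef
  have hSdeg : S.natDegree = d := by rw [hSdef, natDegree_add_C, hdeg]
  have hSder : derivative S = derivative R := by rw [hSdef, derivative_add, derivative_C, add_zero]
  have hd0 : d ≠ 0 := by omega
  have hSlead : S.leadingCoeff = R.leadingCoeff := by
    rw [leadingCoeff, leadingCoeff, hSdeg, hdeg, hSdef, coeff_add, coeff_C, if_neg hd0, add_zero]
  have hSne : S ≠ 0 := leadingCoeff_ne_zero.1 (by rw [hSlead]; exact ne_of_gt hlead)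
  have hSeval : ∀ t : ℝ, S.eval t = R.eval t + c := fun t => by rw [hSdef, eval_add, eval_C]
  have hR'ne : derivative R ≠ 0 := by
    intro h
    have h2 := eq_C_of_derivative_eq_zero h
    rw [h2, natDegree_C] at hdeg
    omega
  have hco : ∀ r : ℝ, (algebraMap ℝ ℂ) r = (r : ℂ) := fun r => rfl
  have hxmem : ∀ i, 1 ≤ i → i ≤ d - 1 → -b ≤ x i ∧ x i ≤ b := by
    intro i h1 h2
    have hmem : x i ∈ (derivative R).roots := by
      rw [← hxroots]
      exact Multiset.mem_map_of_mem x (Finset.mem_def.1 (Finset.mem_Icc.2 ⟨h1, h2⟩))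
    have hroot : (derivative R).eval (x i) = 0 := (mem_roots hR'ne).1 hmem
    have hz : ((derivative R).map (algebraMap ℝ ℂ)).eval ((x i : ℂ)) = 0 := by
      rw [← hco (x i), eval_map, eval₂_at_apply, hroot, map_zero]
    obtain ⟨t, ht, h3, h4⟩ := hroots' _ hz
    rw [Complex.ofReal_inj.1 ht]
    exact ⟨h3, h4⟩
  have mono' : ∀ i j : ℕ, i ≤ j → j ≤ d → x i ≤ x j := by
    intro i j hij hjd
    rcases eq_or_lt_of_le hij with rfl | hlt
    · exact le_refl _
    rcases Nat.eq_zero_or_pos i with rfl | hi1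
    · rw [hx0]
      rcases eq_or_lt_of_le hjd with rfl | hjlt
      · rw [hxd]; exact hab.le
      · exact (hxmem j hlt (by omega)).1
    · rcases eq_or_lt_of_le hjd with rfl | hjlt
      · rw [hxd]; exact (hxmem i hi1 (by omega)).2
      · exact hmono i j hi1 hij (by omega)
  have hmapne : S.map (algebraMap ℝ ℂ) ≠ 0 :=
    (Polynomial.map_ne_zero_iff (algebraMap ℝ ℂ).injective).2 hSne
  have hcardmap : Multiset.card (S.map (algebraMap ℝ ℂ)).roots = d := by
    rw [← hSdeg, ← natDegree_map (algebraMap ℝ ℂ)]; exact (IsAlgClosed.splits _).natDegree_eq_card_roots.symm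
  have main1 : (∀ z : ℂ, (S.map (algebraMap ℝ ℂ)).eval z = 0 →
      ∃ t : ℝ, z = (t : ℂ) ∧ -b ≤ t ∧ t ≤ b) ↔
      (Multiset.card S.roots = d ∧ ∀ r ∈ S.roots, -b ≤ r ∧ r ≤ b) := by
    constructor
    · intro hz
      have hle : (S.map (algebraMap ℝ ℂ)).roots ≤ S.roots.map (algebraMap ℝ ℂ) := by
        rw [Multiset.le_iff_count]
        intro z
        by_cases hzz : z ∈ (S.map (algebraMap ℝ ℂ)).roots
        · have hz0 : (S.map (algebraMap ℝ ℂ)).eval z = 0 := (mem_roots hmapne).1 hzz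
          obtain ⟨t, ht, h3, h4⟩ := hz z hz0
          subst ht
          calc Multiset.count ((t:ℂ)) (S.map (algebraMap ℝ ℂ)).roots
              = rootMultiplicity t S := by
                rw [count_roots, ← hco t, ← eq_rootMultiplicity_map (algebraMap ℝ ℂ).injective]
            _ = Multiset.count ((t:ℂ)) (S.roots.map (algebraMap ℝ ℂ)) := by
                rw [← hco t, Multiset.count_map_eq_count' _ _ (algebraMap ℝ ℂ).injective,
                  count_roots]
            _ ≤ _ := le_refl _
        · rw [Multiset.count_eq_zero_of_notMem hzz]; exact Nat.zero_le _
      have hcard : Multiset.card S.roots = d := by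
        have h1 := Multiset.card_le_card hle
        rw [hcardmap, Multiset.card_map] at h1
        have h2 := card_roots' S
        rw [hSdeg] at h2
        omega
      refine ⟨hcard, fun r hr => ?_⟩
      have hr0 : S.eval r = 0 := (mem_roots hSne).1 hr
      have hz2 : (S.map (algebraMap ℝ ℂ)).eval ((r:ℂ)) = 0 := by
        rw [← hco r, eval_map, eval₂_at_apply, hr0, map_zero]
      obtain ⟨t, ht, h3, h4⟩ := hz _ hz2
      rw [Complex.ofReal_inj.1 ht]
      exact ⟨h3, h4⟩
    · rintro ⟨hcard, hbd⟩ z hz0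
      have heq : S.roots.map (algebraMap ℝ ℂ) = (S.map (algebraMap ℝ ℂ)).roots :=
        roots_map_of_injective_of_card_eq_natDegree (algebraMap ℝ ℂ).injective
          (by rw [hcard, hSdeg])
      have hzmem : z ∈ (S.map (algebraMap ℝ ℂ)).roots := (mem_roots hmapne).2 hz0
      rw [← heq] at hzmem
      obtain ⟨r, hr, hrz⟩ := Multiset.mem_map.1 hzmem
      exact ⟨r, by rw [← hrz, hco], (hbd r hr).1, (hbd r hr).2⟩
  have main2 : (Multiset.card S.roots = d ∧ ∀ r ∈ S.roots, -b ≤ r ∧ r ≤ b) ↔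
      (∀ k, k ≤ d → 0 ≤ (-1:ℝ)^(d-k) * S.eval (x k)) := by
    constructor
    · rintro ⟨hcard, hbd⟩ k hk
      have hfact : C S.leadingCoeff * (S.roots.map (fun z => X - C z)).prod = S :=
        C_leadingCoeff_mul_prod_multiset_X_sub_C (by rw [hcard, hSdeg])
      have hev : S.eval (x k) = S.leadingCoeff * (S.roots.map (fun z => x k - z)).prod := by
        conv_lhs => rw [← hfact]
        rw [eval_mul, eval_C, eval_multiset_prod, Multiset.map_map]
        simp only [Function.comp_apply, eval_sub, eval_X, eval_C]
      by_cases hroot : S.eval (x k) = 0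
      · rw [hroot, mul_zero]
      · have hknotmem : ∀ z ∈ S.roots, z ≠ x k := by
          intro z hz hzx
          have h5 := (mem_roots hSne).1 hz
          rw [IsRoot, hzx] at h5
          exact hroot h5
        have hmm' : Multiset.card (S.roots.filter (fun z => x k < z))
            + Multiset.card (S.roots.filter (fun z => z < x k)) = d := by
          have h1 := Multiset.filter_add_filter (fun z => x k < z) (fun z => z < x k) S.roots
          have h2 : S.roots.filter (fun z => x k < z ∧ z < x k) = 0 :=
            Multiset.filter_eq_nil.2 (fun z _ hz => absurd hz.2 (not_lt.2 hz.1.le))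
          have h3 : S.roots.filter (fun z => x k < z ∨ z < x k) = S.roots :=
            Multiset.filter_eq_self.2 (fun z hz => (lt_or_gt_of_ne (hknotmem z hz)).symm)
          have h4 := congrArg Multiset.card h1
          rw [h2, h3, Multiset.card_add, Multiset.card_add, Multiset.card_zero, add_zero,
            hcard] at h4
          exact h4
        have hmk : Multiset.card (S.roots.filter (fun z => x k < z)) = d - k := by
          rcases Nat.eq_zero_or_pos k with rfl | hk1
          · have heq : S.roots.filter (fun z => x 0 < z) = S.roots := by
              refine Multiset.filter_eq_self.2 (fun z hz => ?_)
              have h5 := (hbd z hz).1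
              have h6 := hknotmem z hz
              rw [hx0]
              rcases lt_or_eq_of_le h5 with h | h
              · exact h
              · exact absurd (hx0.trans h).symm h6
            rw [heq, hcard]
            omega
          rcases eq_or_lt_of_le hk with heqkd | hkd
          · have heq : S.roots.filter (fun z => x k < z) = 0 :=
              Multiset.filter_eq_nil.2 (fun z hz hlt => absurd hlt
                (not_lt.2 (by rw [heqkd, hxd]; exact (hbd z hz).2)))
            rw [heq, Multiset.card_zero]
            omega
          · have hhalf1 := card_roots_filter_le_derivative S (fun z => x k < z)
              (fun u v w hu _ huv _ => lt_trans hu huv)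
            have hhalf2 := card_roots_filter_le_derivative S (fun z => z < x k)
              (fun u v w _ hw _ hvw => lt_trans hvw hw)
            rw [hSder, ← hxroots, Multiset.filter_map, Multiset.card_map] at hhalf1 hhalf2
            have hb1 := card_filter_index_le 1 (d-1) (k+1) (d-1)
              ((fun z => x k < z) ∘ x) (by
                intro i h1 h2 h3
                refine ⟨?_, h2⟩
                by_contra h
                push_neg at h
                exact absurd (mono' i k (by omega) hk) (not_le.2 h3))
            have hb2 := card_filter_index_le 1 (d-1) 1 (k-1)
              ((fun z => z < x k) ∘ x) (by
                intro i h1 h2 h3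
                refine ⟨h1, ?_⟩
                by_contra h
                push_neg at h
                exact absurd (mono' k i (by omega) (by omega)) (not_le.2 h3))
            omega
        have hsp := sign_prod_aux (x k) S.roots hknotmem
        rw [hmk] at hsp
        rw [hev]
        have hl : 0 < S.leadingCoeff := by rw [hSlead]; exact hlead
        nlinarith [hsp, hl, mul_pos hl hsp]
    · intro hsign
      have hxb : ∀ k, k ≤ d → x k ≤ b := fun k hk => by
        rw [← hxd]; exact mono' k d hk (le_refl d)
      have hbase : d - d + (if 1 ≤ d ∧ S.eval (x d) = 0 then 1 else 0)
          ≤ Multiset.card (S.roots.filter (fun z => x d ≤ z ∧ z ≤ b)) := by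
        split_ifs with h
        · have hmem : x d ∈ S.roots.filter (fun z => x d ≤ z ∧ z ≤ b) :=
            Multiset.mem_filter.2 ⟨(mem_roots hSne).2 h.2, le_refl _, hxb d (le_refl d)⟩
          have := Multiset.card_pos_iff_exists_mem.2 ⟨_, hmem⟩
          omega
        · omega
      have key : ∀ n k, k ≤ d → d - k ≤ n →
          d - k + (if 1 ≤ k ∧ S.eval (x k) = 0 then 1 else 0)
            ≤ Multiset.card (S.roots.filter (fun z => x k ≤ z ∧ z ≤ b)) := by
        intro n
        induction n with
        | zero =>
          intro k hk hn
          have hkd : k = d := by omega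
          subst hkd
          exact hbase
        | succ n ih =>
          intro k hk hn
          rcases eq_or_lt_of_le hk with rfl | hklt
          · exact hbase
          by_cases hS0 : S.eval (x k) = 0
          · -- Case A : x k is a root of S
            have hTne : ((Finset.Icc k d).filter (fun i => x i = x k)).Nonempty :=
              ⟨k, Finset.mem_filter.2 ⟨Finset.mem_Icc.2 ⟨le_refl k, hk⟩, rfl⟩⟩
            set j := ((Finset.Icc k d).filter (fun i => x i = x k)).max' hTne with hjdef
            have hjmem := ((Finset.Icc k d).filter (fun i => x i = x k)).max'_mem hTne
            rw [Finset.mem_filter, Finset.mem_Icc] at hjmem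
            obtain ⟨⟨hkj, hjd⟩, hxj⟩ := hjmem
            have hjtop : ∀ i, k ≤ i → i ≤ d → x i = x k → i ≤ j := fun i h1 h2 h3 =>
              Finset.le_max' _ i (Finset.mem_filter.2 ⟨Finset.mem_Icc.2 ⟨h1, h2⟩, h3⟩)
            have hblock : ∀ i, k ≤ i → i ≤ j → x i = x k := fun i h1 h2 =>
              le_antisymm (hxj ▸ mono' i j h2 hjd) (mono' k i h1 (le_trans h2 hjd))
            have hμpos : 1 ≤ S.rootMultiplicity (x k) := (rootMultiplicity_pos hSne).2 hS0
            have hμ : S.rootMultiplicity (x k) = (derivative R).roots.count (x k) + 1 := by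
              have h5 := derivative_rootMultiplicity_of_root (p := S) (t := x k) hS0
              rw [hSder, ← count_roots] at h5
              omega
            have hMge : (min j (d-1) + 1) - max k 1
                ≤ (derivative R).roots.count (x k) := by
              rw [← hxroots, Multiset.count_map]
              exact card_filter_index_ge 1 (d-1) (max k 1) (min j (d-1))
                (fun i => x k = x i) (le_max_right k 1) (min_le_right _ _)
                (fun i h1 h2 => (hblock i (le_trans (le_max_left k 1) h1)
                  (le_trans h2 (min_le_left _ _))).symm)
            have hcnt : Multiset.card (S.roots.filter (fun z => z = x k))
                = S.rootMultiplicity (x k) := by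
              rw [Multiset.filter_eq', Multiset.card_replicate, count_roots]
            rcases eq_or_lt_of_le hjd with heq | hjlt
            · -- j = d
              have hk1 : 1 ≤ k := by
                by_contra h
                have hk0 : k = 0 := by omega
                rw [heq, hxd, hk0, hx0] at hxj
                linarith
              have hfle : Multiset.card (S.roots.filter (fun z => z = x k))
                  ≤ Multiset.card (S.roots.filter (fun z => x k ≤ z ∧ z ≤ b)) := by
                apply Multiset.card_le_card
                apply Multiset.monotone_filter_right
                intro z hz
                rw [hz]
                exact ⟨le_refl _, hxb k hk⟩
              rw [if_pos ⟨hk1, hS0⟩]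
              have hminmax1 : min j (d-1) = d - 1 := by omega
              have hminmax2 : max k 1 = k := by omega
              rw [hminmax1, hminmax2] at hMge
              omega
            · -- j < d
              have hj1 : j + 1 ≤ d := hjlt
              have hxj1 : x k < x (j+1) := by
                rcases lt_or_eq_of_le (mono' k (j+1) (by omega) hj1) with h | h
                · exact h
                · exact absurd (hjtop (j+1) (by omega) hj1 h.symm) (by omega)
              have hih := ih (j+1) hj1 (by omega)
              have hsplit := filter_card_helper S.roots (fun z => z = x k)
                (fun z => x (j+1) ≤ z ∧ z ≤ b) (fun z => x k ≤ z ∧ z ≤ b)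
                (fun z hz h5 => by rw [hz] at h5; linarith [h5.1])
                (fun z hz => by rw [hz]; exact ⟨le_refl _, hxb k hk⟩)
                (fun z hz => ⟨le_trans hxj1.le hz.1, hz.2⟩)
              by_cases hS1 : S.eval (x (j+1)) = 0
              · rw [if_pos ⟨by omega, hS1⟩] at hih
                rcases Nat.eq_zero_or_pos k with hk0 | hk1
                · rw [if_neg (fun h => by omega)]
                  have hmm : min j (d-1) = j ∧ max k 1 = 1 := ⟨by omega, by omega⟩
                  rw [hmm.1, hmm.2] at hMge
                  omega
                · rw [if_pos ⟨hk1, hS0⟩]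
                  have hmm : min j (d-1) = j ∧ max k 1 = k := ⟨by omega, by omega⟩
                  rw [hmm.1, hmm.2] at hMge
                  omega
              · rw [if_neg (fun h => hS1 h.2)] at hih
                rcases Nat.eq_zero_or_pos k with hk0 | hk1
                · rw [if_neg (fun h => by omega)]
                  have hmm : min j (d-1) = j ∧ max k 1 = 1 := ⟨by omega, by omega⟩
                  rw [hmm.1, hmm.2] at hMge
                  omega
                · rw [if_pos ⟨hk1, hS0⟩]
                  have hmm : min j (d-1) = j ∧ max k 1 = k := ⟨by omega, by omega⟩
                  rw [hmm.1, hmm.2] at hMge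
                  omega
          · -- Case B : S (x k) ≠ 0
            have hsk := hsign k hk
            have hskpos : 0 < (-1:ℝ)^(d-k) * S.eval (x k) :=
              lt_of_le_of_ne hsk (Ne.symm (mul_ne_zero (pow_ne_zero _ (by norm_num)) hS0))
            have hk1d : k + 1 ≤ d := hklt
            have hih := ih (k+1) hk1d (by omega)
            by_cases hS1 : S.eval (x (k+1)) = 0
            · have hxlt : x k < x (k+1) := by
                rcases lt_or_eq_of_le (mono' k (k+1) (by omega) hk1d) with h | h
                · exact h
                · exfalso; rw [h] at hS0; exact hS0 hS1
              have hmonoN := Multiset.card_le_card (Multiset.monotone_filter_right S.roots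
                (p := fun z => x (k+1) ≤ z ∧ z ≤ b) (q := fun z => x k ≤ z ∧ z ≤ b)
                (fun z hz => ⟨le_trans hxlt.le hz.1, hz.2⟩))
              rw [if_pos ⟨by omega, hS1⟩] at hih
              rw [if_neg (fun h => hS0 h.2)]
              omega
            · have hsk1 := hsign (k+1) hk1d
              have hsk1pos : 0 < (-1:ℝ)^(d-(k+1)) * S.eval (x (k+1)) :=
                lt_of_le_of_ne hsk1 (Ne.symm (mul_ne_zero (pow_ne_zero _ (by norm_num)) hS1))
              have hdk : d - k = (d - (k+1)) + 1 := by omega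
              rw [hdk, pow_succ] at hskpos
              have hxlt : x k < x (k+1) := by
                rcases lt_or_eq_of_le (mono' k (k+1) (by omega) hk1d) with h | h
                · exact h
                · exfalso
                  rw [h] at hskpos
                  nlinarith [hsk1pos, hskpos]
              have hprodneg : S.eval (x k) * S.eval (x (k+1)) < 0 := by
                have hsq2 : ((-1:ℝ))^(d-(k+1)) * ((-1:ℝ))^(d-(k+1)) = 1 := by
                  rw [← pow_add]
                  exact Even.neg_one_pow ⟨d-(k+1), rfl⟩
                nlinarith [hskpos, hsk1pos]
              obtain ⟨w, hw1, hw2⟩ : ∃ w, w ∈ Set.Ioo (x k) (x (k+1))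
                  ∧ S.eval w = 0 := by
                rcases lt_trichotomy (S.eval (x k)) 0 with h | h | h
                · have h1 : 0 < S.eval (x (k+1)) := by nlinarith
                  obtain ⟨w, hw, hweq⟩ := intermediate_value_Ioo hxlt.le S.continuousOn
                    (Set.mem_Ioo.2 ⟨h, h1⟩)
                  exact ⟨w, hw, hweq⟩
                · exact absurd h hS0
                · have h1 : S.eval (x (k+1)) < 0 := by nlinarith
                  obtain ⟨w, hw, hweq⟩ := intermediate_value_Ioo' hxlt.le S.continuousOn
                    (Set.mem_Ioo.2 ⟨h1, h⟩)
                  exact ⟨w, hw, hweq⟩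
              have hwroot : w ∈ S.roots := (mem_roots hSne).2 hw2
              have hsplit := filter_card_helper S.roots (fun z => z = w)
                (fun z => x (k+1) ≤ z ∧ z ≤ b) (fun z => x k ≤ z ∧ z ≤ b)
                (fun z hz h5 => by rw [hz] at h5; linarith [h5.1, hw1.2])
                (fun z hz => by rw [hz]; exact ⟨hw1.1.le, le_trans hw1.2.le (hxb (k+1) hk1d)⟩)
                (fun z hz => ⟨le_trans hxlt.le hz.1, hz.2⟩)
              have hwcnt : 1 ≤ Multiset.card (S.roots.filter (fun z => z = w)) := by
                rw [Multiset.filter_eq', Multiset.card_replicate]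
                exact Multiset.count_pos.2 hwroot
              rw [if_neg (fun h => hS1 h.2)] at hih
              rw [if_neg (fun h => hS0 h.2)]
              omega
      have hfin := key d 0 (by omega) (by omega)
      rw [if_neg (fun h => by omega)] at hfin
      have hle2 : Multiset.card S.roots ≤ d := by
        have := card_roots' S
        rw [hSdeg] at this
        exact this
      have hflecard := Multiset.card_le_card
        (Multiset.filter_le (fun z => x 0 ≤ z ∧ z ≤ b) S.roots)
      have hcard : Multiset.card S.roots = d := by omega
      refine ⟨hcard, fun r hr => ?_⟩
      have heqf : S.roots.filter (fun z => x 0 ≤ z ∧ z ≤ b) = S.roots :=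
        Multiset.eq_of_le_of_card_le
          (Multiset.filter_le (fun z => x 0 ≤ z ∧ z ≤ b) S.roots) (by omega)
      rw [← heqf] at hr
      have := (Multiset.mem_filter.1 hr).2
      rw [hx0] at this
      exact this
  have main3 : (∀ k, k ≤ d → 0 ≤ (-1:ℝ)^(d-k) * S.eval (x k)) ↔
      ((∀ i : ℕ, i ≤ d / 2 → 0 ≤ R.eval (x (d - 2 * i)) + c) ∧
        (∀ i : ℕ, i ≤ (d - 1) / 2 → R.eval (x (d - 1 - 2 * i)) + c ≤ 0)) := by
    simp only [hSeval]
    constructor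
    · intro h
      constructor
      · intro i hi
        have h2 := h (d - 2*i) (by omega)
        have he : d - (d - 2*i) = 2*i := by omega
        rw [he] at h2
        have hpow : ((-1:ℝ))^(2*i) = 1 := by rw [pow_mul]; norm_num
        rw [hpow, one_mul] at h2
        exact h2
      · intro i hi
        have h2 := h (d - 1 - 2*i) (by omega)
        have he : d - (d - 1 - 2*i) = 2*i + 1 := by omega
        rw [he] at h2
        have hpow : ((-1:ℝ))^(2*i+1) = -1 := by rw [pow_succ, pow_mul]; norm_num
        rw [hpow] at h2
        linarith
    · rintro ⟨h1, h2⟩ k hk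
      rcases Nat.even_or_odd (d - k) with ⟨i, hi⟩ | ⟨i, hi⟩
      · have hk1 : k = d - 2*i := by omega
        have hi2 : i ≤ d / 2 := by omega
        have h3 := h1 i hi2
        rw [← hk1] at h3
        have hpow : ((-1:ℝ))^(d-k) = 1 := by
          rw [hi, show i + i = 2*i from by omega, pow_mul]; norm_num
        rw [hpow, one_mul]
        exact h3
      · have hk1 : k = d - 1 - 2*i := by omega
        have hi2 : i ≤ (d-1) / 2 := by omega
        have h3 := h2 i hi2
        rw [← hk1] at h3
        have hpow : ((-1:ℝ))^(d-k) = -1 := by rw [hi, pow_succ, pow_mul]; norm_num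
        rw [hpow]
        linarith
  exact main1.trans (main2.trans main3)
end
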